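/- Let 𝒯 be a single-vertex triangulation of a closed oriented three-manifold, or an ideal triangulation of an oriented three-manifold with no spherical boundary components, and suppose 𝒯 has no degree one edges. Let e be an edge of degree two, let △ be a triangle incident to e with other edges e′ and e″, and suppose the two tetrahedra incident to e are also glued along edges ē′ and ē″ (so that e, e′, e″, ē′, ē″ are the edges of the two tetrahedra incident to e). Then each of the edges e′, e″, ē′, ē″ has degree at least three. -/

import Mathlib

/-!
Formalization framework for triangulations of three-manifolds
(Matveev/Piergallini-style triangulations, following Wheeler,
"Connectivity of triangulations without degree one edges under 2-3 and 3-2 moves").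

A triangulation is a finite family of oriented model tetrahedra together with
orientation-reversing face pairings; no face is glued to itself, faces may be left
unglued (boundary faces).  The face of a model tetrahedron opposite vertex `i` is
labelled `i`; a pairing of face `(t, i)` with face `(t', i')` is recorded together
with the induced simplicial vertex correspondence, extended to a permutation
`σ` of `Fin 4` with `σ i = i'`.  Since all model tetrahedra are identically
oriented, a face pairing is orientation-reversing exactly when `σ` is odd.
-/

namespace Paper

open Equiv

structure Tri : Type 1 where
  ι : Type
  fin : Fintype ι
  dec : DecidableEq ι
  glue : ι × Fin 4 → Option ((ι × Fin 4) × Perm (Fin 4))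
  glue_ne : ∀ F P, glue F = some P → P.1 ≠ F
  glue_symm : ∀ F F' σ, glue F = some (F', σ) → glue F' = some (F, σ⁻¹)
  glue_vertex : ∀ F F' σ, glue F = some (F', σ) → σ F.2 = F'.2
  glue_orient : ∀ F F' σ, glue F = some (F', σ) → Perm.sign σ = -1

attribute [instance] Tri.fin Tri.dec

/-- Every face is paired with another face (the complex has no boundary). -/
def Tri.Boundaryless (T : Tri) : Prop := ∀ F, T.glue F ≠ none

/-- An unordered pair of distinct vertex labels of a model tetrahedron. -/
def EdgePair : Type := {s : Finset (Fin 4) // s.card = 2}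

def epair (a b : Fin 4) (h : a ≠ b) : EdgePair := ⟨{a, b}, Finset.card_pair h⟩

def EdgePair.map (s : EdgePair) (π : Perm (Fin 4)) : EdgePair :=
  ⟨s.1.image π, by rw [Finset.card_image_of_injective _ π.injective, s.2]⟩

/-- A model edge: a model tetrahedron together with a pair of its vertices. -/
def Tri.ModelEdge (T : Tri) : Type := T.ι × EdgePair

/-- Two model edges are identified across a single face pairing. -/
def Tri.edgeAdj (T : Tri) : T.ModelEdge → T.ModelEdge → Prop := fun e f =>
  ∃ (i : Fin 4) (G : T.ι × Fin 4) (σ : Perm (Fin 4)),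
    i ∉ e.2.1 ∧ T.glue (e.1, i) = some (G, σ) ∧ f.1 = G.1 ∧ f.2.1 = e.2.1.image σ

/-- Edges of the triangulation: classes of model edges under the identifications. -/
def Tri.EdgeClass (T : Tri) : Type := Quot T.edgeAdj

def Tri.edgeOf (T : Tri) (e : T.ModelEdge) : T.EdgeClass := Quot.mk _ e

/-- The degree of an edge of the triangulation: the number of model edges
identified to form it. -/
noncomputable def Tri.degree (T : Tri) (E : T.EdgeClass) : ℕ :=
  Nat.card {e : T.ModelEdge // T.edgeOf e = E}

def Tri.HasDegOneEdge (T : Tri) : Prop := ∃ e : T.ModelEdge, T.degree (T.edgeOf e) = 1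

/-- An edge lying in an unglued (boundary) face. -/
def Tri.IsBoundaryEdge (T : Tri) (E : T.EdgeClass) : Prop :=
  ∃ (f : T.ModelEdge) (i : Fin 4), T.edgeOf f = E ∧ i ∉ f.2.1 ∧ T.glue (f.1, i) = none

/-- Identification of model vertices across a single face pairing. -/
def Tri.vertAdj (T : Tri) : T.ι × Fin 4 → T.ι × Fin 4 → Prop := fun v w =>
  ∃ (i : Fin 4) (G : T.ι × Fin 4) (σ : Perm (Fin 4)),
    i ≠ v.2 ∧ T.glue (v.1, i) = some (G, σ) ∧ w = (G.1, σ v.2)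

def Tri.VertClass (T : Tri) : Type := Quot T.vertAdj

noncomputable def Tri.vertexCount (T : Tri) : ℕ := Nat.card T.VertClass

/-! ### The underlying topological space -/

instance (T : Tri) : TopologicalSpace T.ι := ⊥

def Tri.Pt (T : Tri) : Type := T.ι × (stdSimplex ℝ (Fin 4))

instance (T : Tri) : TopologicalSpace T.Pt :=
  inferInstanceAs (TopologicalSpace (T.ι × (stdSimplex ℝ (Fin 4))))

/-- Identification of points of the disjoint union of the model tetrahedra
(in barycentric coordinates) induced by a face pairing. -/
def Tri.spaceRel (T : Tri) : T.Pt → T.Pt → Prop := fun p q =>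
  ∃ (i : Fin 4) (G : T.ι × Fin 4) (σ : Perm (Fin 4)),
    T.glue (p.1, i) = some (G, σ) ∧ (p.2 : Fin 4 → ℝ) i = 0 ∧
    q.1 = G.1 ∧ (q.2 : Fin 4 → ℝ) = (p.2 : Fin 4 → ℝ) ∘ ⇑σ.symm

/-- The underlying space of the triangulation. -/
def Tri.Space (T : Tri) : Type := Quot T.spaceRel

instance (T : Tri) : TopologicalSpace T.Space :=
  inferInstanceAs (TopologicalSpace (Quot T.spaceRel))

def vpoint (v : Fin 4) : stdSimplex ℝ (Fin 4) :=
  ⟨fun j => if j = v then 1 else 0, by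
    refine ⟨fun j => ?_, by simp⟩
    dsimp only; split <;> norm_num⟩

def Tri.IsVertexPoint (T : Tri) (x : T.Space) : Prop :=
  ∃ (t : T.ι) (v : Fin 4), x = Quot.mk _ (t, vpoint v)

/-- The underlying space of the associated ideal triangulation: the space with
the vertices removed. -/
def Tri.IdealSpace (T : Tri) : Type := {x : T.Space // ¬ T.IsVertexPoint x}

instance (T : Tri) : TopologicalSpace T.IdealSpace :=
  inferInstanceAs (TopologicalSpace {x : T.Space // ¬ T.IsVertexPoint x})

/-- The link of a vertex of the triangulation, realized as the union of the
cross-section triangles at barycentric height `3/4` towards that vertex. -/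
def Tri.link (T : Tri) (V : T.VertClass) : Set T.Space :=
  {x | ∃ (t : T.ι) (v : Fin 4) (p : stdSimplex ℝ (Fin 4)),
      Quot.mk T.vertAdj (t, v) = V ∧ (p : Fin 4 → ℝ) v = 3/4 ∧ x = Quot.mk _ (t, p)}

noncomputable def Sphere2 : Type := Metric.sphere (0 : EuclideanSpace ℝ (Fin 3)) 1

noncomputable instance : TopologicalSpace Sphere2 :=
  inferInstanceAs (TopologicalSpace (Metric.sphere (0 : EuclideanSpace ℝ (Fin 3)) 1))

def Tri.HasSphericalLink (T : Tri) (V : T.VertClass) : Prop :=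
  Nonempty (T.link V ≃ₜ Sphere2)

/-! ### Canonical permutations -/

def p23 : Perm (Fin 4) := Equiv.swap 2 3
def p01 : Perm (Fin 4) := Equiv.swap 0 1
/-- the `3`-cycle `(1 3 2)` -/
def c132 : Perm (Fin 4) := Equiv.swap 1 3 * Equiv.swap 3 2
/-- the `3`-cycle `(1 2 3)` -/
def c123 : Perm (Fin 4) := Equiv.swap 1 2 * Equiv.swap 2 3
/-- the permutation `(0 1)(2 3)` -/
def c01x23 : Perm (Fin 4) := Equiv.swap 0 1 * Equiv.swap 2 3
/-- the `3`-cycle `(0 1 2)` -/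
def c012 : Perm (Fin 4) := Equiv.swap 0 1 * Equiv.swap 1 2
/-- the `3`-cycle `(0 1 3)` -/
def c013 : Perm (Fin 4) := Equiv.swap 0 1 * Equiv.swap 1 3
/-- the `4`-cycle `(0 3 1 2)` -/
def aV : Perm (Fin 4) := Equiv.swap 0 3 * Equiv.swap 3 1 * Equiv.swap 1 2
/-- the permutation `(0 3)(1 2)` -/
def gV : Perm (Fin 4) := Equiv.swap 0 3 * Equiv.swap 1 2

/-! ### The 2-3 move

A 2-3 move replaces two distinct model tetrahedra `tA, tB` of `T`, glued to each
other along a face, by three model tetrahedra `tP, tQ, tR` of `T'` arranged around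
a new edge joining the two vertices (apexes) of `tA`, `tB` not on the shared face.
`πA, …, πR` record (orientation-preserving) identifications of the model tetrahedra
involved with the labelled tetrahedra of the canonical local picture of the move:
for `tA` the apex is vertex `πA 0` and the shared face is `(tA, πA 0)`; the new
central edge of `T'` is the edge `{πP 0, πP 1}` of `tP`.  The data `ρ, μ, Φ, τ`
record how the tetrahedra, faces and face pairings away from the move are carried
from `T` to `T'`. -/

structure Move23 (T T' : Tri) : Type where
  tA : T.ι
  tB : T.ι
  hAB : tA ≠ tB
  πA : Perm (Fin 4)
  πB : Perm (Fin 4)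
  hsA : Perm.sign πA = 1
  hsB : Perm.sign πB = 1
  hglue : T.glue (tA, πA 0) = some ((tB, πB 0), πB * p23 * πA⁻¹)
  tP : T'.ι
  tQ : T'.ι
  tR : T'.ι
  hPQ : tP ≠ tQ
  hPR : tP ≠ tR
  hQR : tQ ≠ tR
  πP : Perm (Fin 4)
  πQ : Perm (Fin 4)
  πR : Perm (Fin 4)
  hsP : Perm.sign πP = 1
  hsQ : Perm.sign πQ = 1
  hsR : Perm.sign πR = 1
  hPQglue : T'.glue (tP, πP 2) = some ((tQ, πQ 3), πQ * p23 * πP⁻¹)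
  hQRglue : T'.glue (tQ, πQ 2) = some ((tR, πR 3), πR * p23 * πQ⁻¹)
  hRPglue : T'.glue (tR, πR 2) = some ((tP, πP 3), πP * p23 * πR⁻¹)
  ρ : {t : T.ι // t ≠ tA ∧ t ≠ tB} ≃ {s : T'.ι // s ≠ tP ∧ s ≠ tQ ∧ s ≠ tR}
  μ : T.ι → Perm (Fin 4)
  hμ : ∀ t, Perm.sign (μ t) = 1
  Φ : T.ι × Fin 4 → T'.ι × Fin 4
  τ : T.ι × Fin 4 → Perm (Fin 4)
  hΦout : ∀ (t : T.ι) (h : t ≠ tA ∧ t ≠ tB) (j : Fin 4),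
    Φ (t, j) = ((ρ ⟨t, h⟩).val, μ t j) ∧ τ (t, j) = μ t
  hΦA : ∀ k : Fin 4, k ≠ 0 →
    Φ (tA, πA k) = ![(tP, πP 1), (tQ, πQ 1), (tR, πR 1), (tP, πP 1)] k ∧
    τ (tA, πA k) = ![1, πQ * πA⁻¹, πR * c132 * πA⁻¹, πP * c123 * πA⁻¹] k
  hΦB : ∀ k : Fin 4, k ≠ 0 →
    Φ (tB, πB k) = ![(tQ, πQ 0), (tQ, πQ 0), (tP, πP 0), (tR, πR 0)] k ∧
    τ (tB, πB k) = ![1, πQ * c01x23 * πB⁻¹, πP * c012 * πB⁻¹, πR * c013 * πB⁻¹] k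
  hcompat : ∀ F G σ, F ≠ (tA, πA 0) → F ≠ (tB, πB 0) →
      T.glue F = some (G, σ) → T'.glue (Φ F) = some (Φ G, τ G * σ * (τ F)⁻¹)
  hcompat_none : ∀ F, F ≠ (tA, πA 0) → F ≠ (tB, πB 0) →
      T.glue F = none → T'.glue (Φ F) = none

/-- The new central (degree three) edge of a 2-3 move, as a model edge of `T'`. -/
def Move23.centralEdge {T T' : Tri} (m : Move23 T T') : T'.ModelEdge :=
  (m.tP, epair (m.πP 0) (m.πP 1) (m.πP.injective.ne (by decide)))

/-- Correspondence between (model) edges of `T` and of `T'` under a 2-3 move: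
every model edge not on the central edge survives, carried by the face
correspondence `Φ, τ` through any face containing it that is not the disappearing
shared face. -/
def Move23.edgeCorr {T T' : Tri} (m : Move23 T T') :
    T.ModelEdge → T'.ModelEdge → Prop := fun e f =>
  ∃ i : Fin 4, i ∉ e.2.1 ∧ (e.1, i) ≠ (m.tA, m.πA 0) ∧ (e.1, i) ≠ (m.tB, m.πB 0) ∧
    f.1 = (m.Φ (e.1, i)).1 ∧ f.2 = e.2.map (m.τ (e.1, i))

/-- `T` and `T'` are related by a 2-3 move. -/
def Pachner23 (T T' : Tri) : Prop := Nonempty (Move23 T T')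

/-- `T` and `T'` are related by a 2-3 move or by a 3-2 move. -/
def PachnerStep (T T' : Tri) : Prop := Pachner23 T T' ∨ Pachner23 T' T

/-- connectivity by a sequence of 2-3 and 3-2 moves -/
def MovePath (T T' : Tri) : Prop :=
  ∃ (N : ℕ) (seq : Fin (N + 1) → Tri), seq 0 = T ∧ seq (Fin.last N) = T' ∧
    ∀ k : Fin N, PachnerStep (seq k.castSucc) (seq k.succ)

/-- connectivity by a sequence of 2-3 and 3-2 moves in which no triangulation,
including the two endpoints, has a degree one edge -/
def NoDegOnePath (T T' : Tri) : Prop :=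
  ∃ (N : ℕ) (seq : Fin (N + 1) → Tri), seq 0 = T ∧ seq (Fin.last N) = T' ∧
    (∀ k, ¬ (seq k).HasDegOneEdge) ∧
    ∀ k : Fin N, PachnerStep (seq k.castSucc) (seq k.succ)

end Paper


open Paper Equiv


lemma three_distinct {α : Type} [Finite α] {P : α → Prop} {a b c : α}
    (ha : P a) (hb : P b) (hc : P c) (hab : a ≠ b) (hca : c ≠ a) (hcb : c ≠ b) :
    3 ≤ Nat.card {x // P x} := by
  have hinj : Function.Injective (![⟨a,ha⟩,⟨b,hb⟩,⟨c,hc⟩] : Fin 3 → {x // P x}) := by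
    intro i j hij
    fin_cases i <;> fin_cases j <;> simp_all [Subtype.ext_iff]
  calc (3:ℕ) = Nat.card (Fin 3) := by simp
    _ ≤ _ := Nat.card_le_card_of_injective _ hinj

instance : Finite EdgePair := by unfold EdgePair; infer_instance
instance (T : Tri) : Finite T.ModelEdge := by unfold Tri.ModelEdge; infer_instance

lemma helper1 : ∀ a c y : Fin 4, (a = 0 ∨ a = 1) → (c = 2 ∨ c = 3) →
    y ≠ a → y ≠ c → y ≠ p01 a → y = p23 c := by decide

lemma helper2 : ∀ a c y : Fin 4, (a = 0 ∨ a = 1) → (c = 2 ∨ c = 3) →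
    y ≠ p01 a → y ≠ c → (y = a ∨ y = p23 c) := by decide

lemma helper3 : ∀ a c : Fin 4, (a = 0 ∨ a = 1) → (c = 2 ∨ c = 3) →
    ∀ δ : Perm (Fin 4), Perm.sign δ = -1 → δ (p01 a) = a →
    (δ a = p01 a ∨ δ a = c) → (δ c = p01 a ∨ δ c = c) → δ = p01 := by decide

set_option maxHeartbeats 1000000 in
lemma force (T : Tri) (hb : T.Boundaryless)
    (tU tV : T.ι) (hne : tU ≠ tV) (πU πV : Perm (Fin 4))
    (hsU : Perm.sign πU = 1) (hsV : Perm.sign πV = 1)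
    (h2 : T.glue (tU, πU 2) = some ((tV, πV 2), πV * p01 * πU⁻¹))
    (h3 : T.glue (tU, πU 3) = some ((tV, πV 3), πV * p01 * πU⁻¹))
    (a c : Fin 4) (ha4 : a = 0 ∨ a = 1) (hc4 : c = 2 ∨ c = 3) (hne01 : a ≠ c)
    (hdeg : T.degree (T.edgeOf (tU, epair (πU a) (πU c) (πU.injective.ne hne01))) ≤ 2) :
    T.glue (tU, πU (p01 a)) = some ((tV, πV a), πV * p01 * πU⁻¹) := by
  have hpa : p01 a ≠ a ∧ p01 a ≠ c ∧ p23 c ≠ a ∧ p23 c ≠ c ∧ p01 c = c ∧ p01 a ≠ p23 c := by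
    obtain ha | ha := ha4 <;> obtain hc | hc := hc4 <;> subst ha <;> subst hc <;>
      exact ⟨by decide, by decide, by decide, by decide, by decide, by decide⟩
  obtain ⟨hp1, hp2, hp3, hp4, hp5, hp6⟩ := hpa
  set σ : Perm (Fin 4) := πV * p01 * πU⁻¹ with hσ
  have hσs : ∀ x, σ (πU x) = πV (p01 x) := by
    intro x
    simp only [hσ, Perm.mul_apply, Perm.inv_def, Equiv.symm_apply_apply]
  have hc' : T.glue (tU, πU (p23 c)) = some ((tV, πV (p23 c)), σ) := by
    rcases hc4 with rfl | rfl
    · have h23 : p23 (2:Fin 4) = 3 := by decide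
      rw [h23]; exact h3
    · have h23 : p23 (3:Fin 4) = 2 := by decide
      rw [h23]; exact h2
  set e₀ : T.ModelEdge := (tU, epair (πU a) (πU c) (πU.injective.ne hne01)) with he₀
  set f₀ : T.ModelEdge := (tV, epair (πV (p01 a)) (πV c) (πV.injective.ne hp2)) with hf₀
  have he2 : e₀.2.1 = {πU a, πU c} := rfl
  have hmem : ∀ x : Fin 4, πU x ∈ ({πU a, πU c} : Finset (Fin 4)) ↔ (x = a ∨ x = c) := by
    intro x; simp [Finset.mem_insert, πU.injective.eq_iff]
  have adj1 : T.edgeAdj e₀ f₀ := by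
    refine ⟨πU (p23 c), (tV, πV (p23 c)), σ, ?_, hc', rfl, ?_⟩
    · rw [he2, hmem]; tauto
    · show ({πV (p01 a), πV c} : Finset (Fin 4)) = Finset.image σ {πU a, πU c}
      rw [Finset.image_insert, Finset.image_singleton, hσs, hσs, hp5]
  have hEq : T.edgeOf e₀ = T.edgeOf f₀ := Quot.sound adj1
  obtain ⟨P, hP⟩ : ∃ P, T.glue (tU, πU (p01 a)) = some P := by
    cases hG : T.glue (tU, πU (p01 a)) with
    | none => exact absurd hG (hb _)
    | some P => exact ⟨P, rfl⟩
  obtain ⟨F₁, σ₁⟩ := P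
  set g₁ : T.ModelEdge := (F₁.1, (epair (πU a) (πU c) (πU.injective.ne hne01)).map σ₁) with hg₁
  have hg2 : g₁.2.1 = ({πU a, πU c} : Finset (Fin 4)).image σ₁ := rfl
  have adj2 : T.edgeAdj e₀ g₁ := by
    refine ⟨πU (p01 a), F₁, σ₁, ?_, hP, rfl, hg2⟩
    rw [he2, hmem]; tauto
  have hgEq : T.edgeOf g₁ = T.edgeOf e₀ := (Quot.sound adj2).symm
  have hef : e₀ ≠ f₀ := fun h => hne (congrArg Prod.fst h)
  have hvert : σ₁ (πU (p01 a)) = F₁.2 := T.glue_vertex _ _ _ hP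
  have hcases : g₁ = e₀ ∨ g₁ = f₀ := by
    by_contra hcon
    push_neg at hcon
    have h3le : 3 ≤ Nat.card {x : T.ModelEdge // T.edgeOf x = T.edgeOf e₀} :=
      three_distinct rfl hEq.symm hgEq hef hcon.1 hcon.2
    have hdd : T.degree (T.edgeOf e₀) = Nat.card {x : T.ModelEdge // T.edgeOf x = T.edgeOf e₀} := rfl
    omega
  rcases hcases with hc1 | hc1
  · -- g₁ = e₀ : contradiction
    exfalso
    have hF1 : F₁.1 = tU := congrArg Prod.fst hc1
    have hset : ({πU a, πU c} : Finset (Fin 4)).image σ₁ = {πU a, πU c} := by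
      rw [← hg2, hc1, he2]
    have hnotin : σ₁ (πU (p01 a)) ∉ ({πU a, πU c} : Finset (Fin 4)) := by
      conv_rhs => rw [← hset]
      simp only [Finset.mem_image]
      rintro ⟨x, hx, hxe⟩
      have hxx := σ₁.injective hxe
      rw [hxx, hmem] at hx
      rcases hx with h | h
      · exact hp1 h
      · exact hp2 h
    have hFne : F₁ ≠ (tU, πU (p01 a)) := T.glue_ne _ _ hP
    have hyv : πU (πU⁻¹ F₁.2) = F₁.2 := πU.apply_symm_apply _
    have hya : πU⁻¹ F₁.2 ≠ a := by
      intro h; apply hnotin; rw [hvert, ← hyv, h, hmem]; tauto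
    have hyb : πU⁻¹ F₁.2 ≠ c := by
      intro h; apply hnotin; rw [hvert, ← hyv, h, hmem]; tauto
    have hyp : πU⁻¹ F₁.2 ≠ p01 a := by
      intro h
      apply hFne
      refine Prod.ext hF1 ?_
      rw [← hyv, h]
    have hyc : πU⁻¹ F₁.2 = p23 c := helper1 a c _ ha4 hc4 hya hyb hyp
    have hsy := T.glue_symm _ _ _ hP
    rw [← @Prod.mk.eta _ _ F₁, hF1, ← hyv, hyc, hc'] at hsy
    exact hne (congrArg (Prod.fst ∘ Prod.fst) (Option.some.inj hsy)).symm
  · -- g₁ = f₀ : the forced gluing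
    have hF1 : F₁.1 = tV := congrArg Prod.fst hc1
    have hset : ({πU a, πU c} : Finset (Fin 4)).image σ₁ = {πV (p01 a), πV c} := by
      rw [← hg2, hc1]
      rfl
    have hmemV : ∀ x : Fin 4, πV x ∈ ({πV (p01 a), πV c} : Finset (Fin 4)) ↔ (x = p01 a ∨ x = c) := by
      intro x; simp [Finset.mem_insert, πV.injective.eq_iff]
    have hnotin : σ₁ (πU (p01 a)) ∉ ({πV (p01 a), πV c} : Finset (Fin 4)) := by
      rw [← hset]
      simp only [Finset.mem_image]
      rintro ⟨x, hx, hxe⟩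
      have hxx := σ₁.injective hxe
      rw [hxx, hmem] at hx
      rcases hx with h | h
      · exact hp1 h
      · exact hp2 h
    have hyv : πV (πV⁻¹ F₁.2) = F₁.2 := πV.apply_symm_apply _
    have hya : πV⁻¹ F₁.2 ≠ p01 a := by
      intro h; apply hnotin; rw [hvert, ← hyv, h, hmemV]; tauto
    have hyb : πV⁻¹ F₁.2 ≠ c := by
      intro h; apply hnotin; rw [hvert, ← hyv, h, hmemV]; tauto
    rcases helper2 a c _ ha4 hc4 hya hyb with hyc | hyc
    · -- the good case : compute σ₁
      have hFv : F₁.2 = πV a := by rw [← hyv, hyc]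
      have hδs : Perm.sign (πV⁻¹ * σ₁ * πU) = -1 := by
        have horr := T.glue_orient _ _ _ hP
        simp [map_mul, horr, hsU, hsV]
      have hδ1 : (πV⁻¹ * σ₁ * πU) (p01 a) = a := by
        simp only [Perm.mul_apply, hvert, hFv, Perm.inv_def, Equiv.symm_apply_apply]
      have hδ2 : (πV⁻¹ * σ₁ * πU) a = p01 a ∨ (πV⁻¹ * σ₁ * πU) a = c := by
        have hm : σ₁ (πU a) ∈ ({πV (p01 a), πV c} : Finset (Fin 4)) := by
          rw [← hset]; exact Finset.mem_image_of_mem _ (by rw [hmem]; tauto)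
        simp only [Finset.mem_insert, Finset.mem_singleton] at hm
        rcases hm with h | h
        · left; simp only [Perm.mul_apply, h, Perm.inv_def, Equiv.symm_apply_apply]
        · right; simp only [Perm.mul_apply, h, Perm.inv_def, Equiv.symm_apply_apply]
      have hδ3 : (πV⁻¹ * σ₁ * πU) c = p01 a ∨ (πV⁻¹ * σ₁ * πU) c = c := by
        have hm : σ₁ (πU c) ∈ ({πV (p01 a), πV c} : Finset (Fin 4)) := by
          rw [← hset]; exact Finset.mem_image_of_mem _ (by rw [hmem]; tauto)
        simp only [Finset.mem_insert, Finset.mem_singleton] at hm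
        rcases hm with h | h
        · left; simp only [Perm.mul_apply, h, Perm.inv_def, Equiv.symm_apply_apply]
        · right; simp only [Perm.mul_apply, h, Perm.inv_def, Equiv.symm_apply_apply]
      have hδ : πV⁻¹ * σ₁ * πU = p01 := helper3 a c ha4 hc4 _ hδs hδ1 hδ2 hδ3
      have hσ₁ : σ₁ = σ := by
        have hgrp : σ₁ = πV * (πV⁻¹ * σ₁ * πU) * πU⁻¹ := by group
        rw [hgrp, hδ, hσ]
      rw [hP, hσ₁]
      congr 1
      refine Prod.ext (Prod.ext hF1 hFv) rfl
    · -- contradiction with hc'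
      exfalso
      have hsy := T.glue_symm _ _ _ hP
      rw [← @Prod.mk.eta _ _ F₁, hF1, ← hyv, hyc] at hsy
      have hsy2 := T.glue_symm _ _ _ hc'
      rw [hsy2] at hsy
      have hj := congrArg (Prod.snd ∘ Prod.fst) (Option.some.inj hsy)
      exact hp6 (πU.injective hj).symm



lemma swap01k : ∀ k : Fin 4, Equiv.swap 0 k 1 ≠ k := by decide

section Key
variable (T : Tri) (u v : T.ι) (k : Fin 4) (σ : Perm (Fin 4))

/-- the closed two-element vertex class -/
def SP (w : T.ι × Fin 4) : Prop := w = (u, k) ∨ w = (v, σ k)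

variable {T u v k σ}
variable (huv : u ≠ v)
  (H : ∀ i, i ≠ k → T.glue (u, i) = some ((v, σ i), σ))

section
include H

lemma Hsymm : ∀ j, j ≠ σ k → T.glue (v, j) = some ((u, σ⁻¹ j), σ⁻¹) := by
  intro j hj
  have hi : σ⁻¹ j ≠ k := by
    intro h
    apply hj
    rw [← h]
    simp
  have := T.glue_symm _ _ _ (H _ hi)
  simpa using this

lemma sp_closed : ∀ w w', T.vertAdj w w' → (SP T u v k σ w ↔ SP T u v k σ w') := by
  intro w w' ⟨i, G, σ', hi, hglue, hw'⟩
  constructor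
  · rintro (rfl | rfl)
    · -- w = (u,k)
      simp only at hglue hi
      rw [H i hi] at hglue
      obtain ⟨h1, h2⟩ := Prod.mk.injEq .. ▸ Option.some.inj hglue
      right
      rw [hw', ← h1, h2]
    · -- w = (v, σ k)
      simp only at hglue hi
      rw [Hsymm H i hi] at hglue
      obtain ⟨h1, h2⟩ := Prod.mk.injEq .. ▸ Option.some.inj hglue
      left
      rw [hw', ← h1, ← h2]
      simp
  · rintro (h | h)
    · -- w' = (u, k)
      have hG1 : G.1 = u := by rw [hw'] at h; exact congrArg Prod.fst h
      have hσ' : σ' w.2 = k := by rw [hw'] at h; exact congrArg Prod.snd h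
      have hsy := T.glue_symm _ _ _ hglue
      by_cases hGk : G.2 = k
      · exfalso
        have hv := T.glue_vertex _ _ _ hglue
        have : i = w.2 := σ'.injective (by rw [hv, hσ', hGk])
        exact hi this
      · rw [← @Prod.mk.eta _ _ G, hG1] at hsy
        rw [H _ hGk] at hsy
        obtain ⟨h1, h2⟩ := Prod.mk.injEq .. ▸ Option.some.inj hsy
        right
        have hw1 : w.1 = v := (congrArg Prod.fst h1).symm
        have hw2 : w.2 = σ k := by
          have hσσ : σ' = σ⁻¹ := by
            have := congrArg (·⁻¹) h2; simpa using this.symm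
          rw [← hσ', hσσ]
          simp
        rw [← @Prod.mk.eta _ _ w, hw1, hw2]
    · -- w' = (v, σ k)
      have hG1 : G.1 = v := by rw [hw'] at h; exact congrArg Prod.fst h
      have hσ' : σ' w.2 = σ k := by rw [hw'] at h; exact congrArg Prod.snd h
      have hsy := T.glue_symm _ _ _ hglue
      by_cases hGk : G.2 = σ k
      · exfalso
        have hv := T.glue_vertex _ _ _ hglue
        have : i = w.2 := σ'.injective (by rw [hv, hσ', hGk])
        exact hi this
      · rw [← @Prod.mk.eta _ _ G, hG1] at hsy
        rw [Hsymm H _ hGk] at hsy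
        obtain ⟨h1, h2⟩ := Prod.mk.injEq .. ▸ Option.some.inj hsy
        left
        have hw1 : w.1 = u := (congrArg Prod.fst h1).symm
        have hw2 : w.2 = k := by
          have hσσ : σ' = σ := by
            have := congrArg (·⁻¹) h2; simpa using this.symm
          have := hσ'
          rw [hσσ] at this
          exact σ.injective this
        rw [← @Prod.mk.eta _ _ w, hw1, hw2]

/-- the lifted invariant -/
lemma sp_lift : ∀ w : T.ι × Fin 4,
    Quot.mk T.vertAdj w = Quot.mk T.vertAdj (u, k) → SP T u v k σ w := by
  have hlift : ∀ x y : T.ι × Fin 4, T.vertAdj x y →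
      (SP T u v k σ x) = (SP T u v k σ y) := by
    intro x y hxy
    exact propext (sp_closed H x y hxy)
  intro w hw
  have hthis : SP T u v k σ w = SP T u v k σ (u, k) :=
    congrArg (Quot.lift (SP T u v k σ) hlift) hw
  rw [hthis]
  left; rfl

lemma vertclass_two (huv : u ≠ v) (h1 : T.vertexCount = 1) : False := by
  obtain ⟨hs, -⟩ := Nat.card_eq_one_iff_unique.mp h1
  have hk1 : Equiv.swap 0 k 1 ≠ k := swap01k k
  have heq : Quot.mk T.vertAdj (u, Equiv.swap 0 k 1) = Quot.mk T.vertAdj (u, k) :=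
    @Subsingleton.elim _ hs _ _
  rcases sp_lift H _ heq with h | h
  · exact hk1 (congrArg Prod.snd h)
  · exact huv (congrArg Prod.fst h)

end
end Key


noncomputable section

def W (a b c ε : ℝ) : EuclideanSpace ℝ (Fin 3) :=
  (EuclideanSpace.equiv (Fin 3) ℝ).symm ![a - 1/12, b - 1/12, ε * (12 * min a (min b c))]

lemma W0 (a b c ε : ℝ) : W a b c ε 0 = a - 1/12 := rfl
lemma W1 (a b c ε : ℝ) : W a b c ε 1 = b - 1/12 := rfl
lemma W2 (a b c ε : ℝ) : W a b c ε 2 = ε * (12 * min a (min b c)) := rfl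

lemma W_ne_zero {a b c : ℝ} (hs : a + b + c = 1/4) {ε : ℝ} (hε : ε = 1 ∨ ε = -1) :
    W a b c ε ≠ 0 := by
  intro h
  have h0 : a - 1/12 = 0 := by rw [← W0 a b c ε, h]; rfl
  have h1 : b - 1/12 = 0 := by rw [← W1 a b c ε, h]; rfl
  have h2 : ε * (12 * min a (min b c)) = 0 := by rw [← W2 a b c ε, h]; rfl
  have hc : c = 1/12 := by linarith
  have hm : min a (min b c) = 1/12 := by
    have h3 : a = 1/12 := by linarith
    have hb : b = 1/12 := by linarith
    rw [h3, hb, hc]; simp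
  rw [hm] at h2
  rcases hε with rfl | rfl <;> norm_num at h2

lemma min3_map {l e : ℝ} (hl : 0 ≤ l) (x y z : ℝ) :
    min (l*x + e) (min (l*y + e) (l*z + e)) = l * min x (min y z) + e := by
  have hmono : Monotone (fun w : ℝ => l * w + e) := fun p q hpq => by
    simp only
    nlinarith
  rw [← hmono.map_min, ← hmono.map_min]

lemma W_inj {a b c a' b' c' ε ε' l : ℝ}
    (ha : 0 ≤ a) (hb : 0 ≤ b) (hc : 0 ≤ c) (ha' : 0 ≤ a') (hb' : 0 ≤ b') (hc' : 0 ≤ c')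
    (hs : a + b + c = 1/4) (hs' : a' + b' + c' = 1/4)
    (hε : ε = 1 ∨ ε = -1) (hε' : ε' = 1 ∨ ε' = -1) (hl : 0 < l)
    (hW : W a b c ε = l • W a' b' c' ε') :
    a = a' ∧ b = b' ∧ c = c' ∧ (ε = ε' ∨ (min a (min b c) = 0 ∧ min a' (min b' c') = 0)) := by
  have e1 : a - 1/12 = l * (a' - 1/12) := by
    have := congrArg (fun x : EuclideanSpace ℝ (Fin 3) => x 0) hW
    simpa [W0] using this
  have e2 : b - 1/12 = l * (b' - 1/12) := by
    have := congrArg (fun x : EuclideanSpace ℝ (Fin 3) => x 1) hW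
    simpa [W1] using this
  have e3 : ε * (12 * min a (min b c)) = l * (ε' * (12 * min a' (min b' c'))) := by
    have := congrArg (fun x : EuclideanSpace ℝ (Fin 3) => x 2) hW
    simpa [W2] using this
  have ec : c - 1/12 = l * (c' - 1/12) := by linear_combination (-1:ℝ) * e1 - e2 + hs - l * hs'
  have hae : a = l * a' + (1 - l)/12 := by linarith
  have hbe : b = l * b' + (1 - l)/12 := by linarith
  have hce : c = l * c' + (1 - l)/12 := by linarith
  have em : min a (min b c) = l * min a' (min b' c') + (1 - l)/12 := by
    rw [hae, hbe, hce, min3_map hl.le]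
  have hm0 : 0 ≤ min a (min b c) := le_min ha (le_min hb hc)
  have hm0' : 0 ≤ min a' (min b' c') := le_min ha' (le_min hb' hc')
  have hlm' : 0 ≤ l * min a' (min b' c') := mul_nonneg hl.le hm0'
  have key : l = 1 ∧ (ε = ε' ∨ (min a (min b c) = 0 ∧ min a' (min b' c') = 0)) := by
    rcases hε with rfl | rfl <;> rcases hε' with rfl | rfl
    · have hme : min a (min b c) = l * min a' (min b' c') := by linarith
      exact ⟨by linarith, Or.inl rfl⟩
    · have hme : min a (min b c) = -(l * min a' (min b' c')) := by linarith
      have hmz : min a (min b c) = 0 := le_antisymm (by linarith) hm0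
      have hmz2 : l * min a' (min b' c') = 0 := by linarith
      have hmz' : min a' (min b' c') = 0 := by
        rcases mul_eq_zero.mp hmz2 with h | h
        · exact absurd h (ne_of_gt hl)
        · exact h
      exact ⟨by linarith [em, hmz, hmz'], Or.inr ⟨hmz, hmz'⟩⟩
    · have hme : -(min a (min b c)) = l * min a' (min b' c') := by linarith
      have hmz : min a (min b c) = 0 := le_antisymm (by linarith) hm0
      have hmz2 : l * min a' (min b' c') = 0 := by linarith
      have hmz' : min a' (min b' c') = 0 := by
        rcases mul_eq_zero.mp hmz2 with h | h
        · exact absurd h (ne_of_gt hl)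
        · exact h
      exact ⟨by linarith [em, hmz, hmz'], Or.inr ⟨hmz, hmz'⟩⟩
    · have hme : min a (min b c) = l * min a' (min b' c') := by linarith
      exact ⟨by linarith, Or.inl rfl⟩
  obtain ⟨hl1, hor⟩ := key
  rw [hl1] at e1 e2 ec
  exact ⟨by linarith, by linarith, by linarith, hor⟩

lemma W_surj (s : EuclideanSpace ℝ (Fin 3)) (hn : ‖s‖ = 1) :
    ∃ a b c t : ℝ, 0 ≤ a ∧ 0 ≤ b ∧ 0 ≤ c ∧ a + b + c = 1/4 ∧ 0 < t ∧
      W a b c (if 0 ≤ s 2 then 1 else -1) = t • s := by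
  have hss : s 0 ^ 2 + s 1 ^ 2 + s 2 ^ 2 = 1 := by
    have h2 : ‖s‖ ^ 2 = 1 := by rw [hn]; norm_num
    rw [EuclideanSpace.norm_eq, Real.sq_sqrt (by positivity)] at h2
    simpa [Fin.sum_univ_three, sq_abs] using h2
  set s1 := s 0 with hs1
  set s2 := s 1 with hs2
  set s3 := s 2 with hs3
  set μ : ℝ := min s1 (min s2 (-(s1 + s2))) with hμ
  have hμ1 : μ ≤ s1 := min_le_left _ _
  have hμ2 : μ ≤ s2 := le_trans (min_le_right _ _) (min_le_left _ _)
  have hμ3 : μ ≤ -(s1 + s2) := le_trans (min_le_right _ _) (min_le_right _ _)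
  have hμ0 : μ ≤ 0 := by linarith
  have habs : 0 ≤ |s3| := abs_nonneg s3
  have hDpos : 0 < |s3| - 12 * μ := by
    rcases lt_or_eq_of_le hμ0 with h | h
    · linarith
    · -- μ = 0 : then s1 = s2 = 0 and |s3| = 1
      have h1 : 0 ≤ s1 := by linarith
      have h2 : 0 ≤ s2 := by linarith
      have h3 : s1 + s2 ≤ 0 := by linarith
      have hz1 : s1 = 0 := by linarith
      have hz2 : s2 = 0 := by linarith
      have h4 : |s3| ^ 2 = 1 := by rw [sq_abs]; nlinarith
      have h5 : (|s3| - 1) * (|s3| + 1) = 0 := by nlinarith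
      rcases mul_eq_zero.mp h5 with h6 | h6
      · have : |s3| = 1 := by linarith
        linarith
      · linarith
  set t : ℝ := 1 / (|s3| - 12 * μ) with ht
  have htpos : 0 < t := by positivity
  have htD : t * (|s3| - 12 * μ) = 1 := by
    rw [ht]; field_simp
  have hts3 : 0 ≤ t * |s3| := mul_nonneg htpos.le habs
  have htμ : -(1/12) ≤ t * μ := by nlinarith
  refine ⟨1/12 + t * s1, 1/12 + t * s2, 1/12 + t * (-(s1+s2)), t, ?_, ?_, ?_, by ring, htpos, ?_⟩
  · nlinarith [mul_le_mul_of_nonneg_left hμ1 htpos.le]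
  · nlinarith [mul_le_mul_of_nonneg_left hμ2 htpos.le]
  · nlinarith [mul_le_mul_of_nonneg_left hμ3 htpos.le]
  · -- the vector equation
    have hmin : min (1/12 + t * s1) (min (1/12 + t * s2) (1/12 + t * (-(s1+s2)))) =
        1/12 + t * μ := by
      have h := min3_map (l := t) (e := 1/12) htpos.le s1 s2 (-(s1+s2))
      rw [show 1/12 + t * s1 = t * s1 + 1/12 from by ring,
        show 1/12 + t * s2 = t * s2 + 1/12 from by ring,
        show 1/12 + t * (-(s1+s2)) = t * (-(s1+s2)) + 1/12 from by ring, h, hμ]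
      ring
    have h12m : 12 * (1/12 + t * μ) = t * |s3| := by nlinarith [htD]
    ext i
    fin_cases i
    · show (1/12 + t * s1) - 1/12 = t * s1
      ring
    · show (1/12 + t * s2) - 1/12 = t * s2
      ring
    · show (if 0 ≤ s3 then (1:ℝ) else -1) * (12 * min _ (min _ _)) = t * s3
      rw [hmin, h12m]
      rcases le_or_gt 0 s3 with h | h
      · rw [if_pos h, abs_of_nonneg h]; ring
      · rw [if_neg (not_le.mpr h), abs_of_neg h]; ring


noncomputable section

instance (T : Tri) : DiscreteTopology T.ι := ⟨rfl⟩

lemma bump_def : True := trivial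

def bump (s : ℝ) : ℝ := max 0 (1 - 12 * |s - 3/4|)

lemma bump_cont : Continuous bump := by
  unfold bump; fun_prop

lemma bump_34 : bump (3/4) = 1 := by norm_num [bump]

lemma bump_0 : bump 0 = 0 := by
  unfold bump
  rw [abs_of_nonpos (by norm_num)]
  norm_num

-- decide helpers about `swap 0 k`
lemma kk_ne (k : Fin 4) : ∀ i : Fin 4, i ≠ 0 → Equiv.swap 0 k i ≠ k := by revert k; decide
lemma kk_enum (k : Fin 4) : ∀ j : Fin 4, j = k ∨ j = Equiv.swap 0 k 1 ∨
    j = Equiv.swap 0 k 2 ∨ j = Equiv.swap 0 k 3 := by revert k; decide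
lemma kk0 (k : Fin 4) : Equiv.swap 0 k 0 = k := by revert k; decide
lemma kkk (k : Fin 4) : Equiv.swap 0 k k = 0 := by revert k; decide

lemma min3_zero {a b c : ℝ} (ha : 0 ≤ a) (hb : 0 ≤ b) (hc : 0 ≤ c)
    (h : a = 0 ∨ b = 0 ∨ c = 0) : min a (min b c) = 0 := by
  apply le_antisymm _ (le_min ha (le_min hb hc))
  rcases h with rfl | rfl | rfl
  · exact min_le_left _ _
  · exact le_trans (min_le_right _ _) (min_le_left _ _)
  · exact le_trans (min_le_right _ _) (min_le_right _ _)

lemma min3_zero_cases {a b c : ℝ} (h : min a (min b c) = 0) : a = 0 ∨ b = 0 ∨ c = 0 := by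
  rcases le_total a (min b c) with h1 | h1
  · left; rw [min_eq_left h1] at h; exact h
  · rw [min_eq_right h1] at h
    rcases le_total b c with h2 | h2
    · right; left; rw [min_eq_left h2] at h; exact h
    · right; right; rw [min_eq_right h2] at h; exact h

lemma W_pm {a b c : ℝ} (h : min a (min b c) = 0) : W a b c 1 = W a b c (-1) := by
  unfold W
  rw [h]
  norm_num

lemma sum4 (k : Fin 4) (p : Fin 4 → ℝ) (hp : ∑ j, p j = 1) :
    p k + p (Equiv.swap 0 k 1) + p (Equiv.swap 0 k 2) + p (Equiv.swap 0 k 3) = 1 := by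
  rw [← Equiv.sum_comp (Equiv.swap 0 k) p, Fin.sum_univ_four, kk0] at hp
  linarith

section Key2
variable (T : Tri) (u v : T.ι) (k : Fin 4) (σ : Perm (Fin 4))

/-- the invariant map to `ℝ³` realizing the link of the vertex class. -/
def gmap : T.Pt → EuclideanSpace ℝ (Fin 3) := fun z =>
  ((if z.1 = u then (1:ℝ) else 0) * bump ((z.2 : Fin 4 → ℝ) k)) •
      W ((z.2 : Fin 4 → ℝ) (Equiv.swap 0 k 1)) ((z.2 : Fin 4 → ℝ) (Equiv.swap 0 k 2))
        ((z.2 : Fin 4 → ℝ) (Equiv.swap 0 k 3)) 1 +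
  ((if z.1 = v then (1:ℝ) else 0) * bump ((z.2 : Fin 4 → ℝ) (σ k))) •
      W ((z.2 : Fin 4 → ℝ) (σ (Equiv.swap 0 k 1))) ((z.2 : Fin 4 → ℝ) (σ (Equiv.swap 0 k 2)))
        ((z.2 : Fin 4 → ℝ) (σ (Equiv.swap 0 k 3))) (-1)

lemma gmap_cont : Continuous (gmap T u v k σ) := by
  unfold gmap
  have hcoord : ∀ j : Fin 4, Continuous (fun z : T.Pt => (z.2 : Fin 4 → ℝ) j) :=
    fun j => (continuous_apply j).comp (continuous_subtype_val.comp continuous_snd)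
  have hW : ∀ (f g h : T.Pt → ℝ) (ε : ℝ), Continuous f → Continuous g → Continuous h →
      Continuous (fun z => W (f z) (g z) (h z) ε) := by
    intro f g h ε hf hg hh
    apply Continuous.comp (EuclideanSpace.equiv (Fin 3) ℝ).symm.continuous
    apply continuous_pi
    intro i
    fin_cases i
    · show Continuous fun z => f z - 1/12
      fun_prop
    · show Continuous fun z => g z - 1/12
      fun_prop
    · show Continuous fun z => ε * (12 * min (f z) (min (g z) (h z)))
      fun_prop
  have hind : ∀ w : T.ι, Continuous (fun z : T.Pt => if z.1 = w then (1:ℝ) else 0) := by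
    intro w
    apply Continuous.comp (g := fun t : T.ι => if t = w then (1:ℝ) else 0)
      continuous_of_discreteTopology continuous_fst
  apply Continuous.add
  · exact ((hind u).mul (bump_cont.comp (hcoord k))).smul
      (hW _ _ _ _ (hcoord _) (hcoord _) (hcoord _))
  · exact ((hind v).mul (bump_cont.comp (hcoord (σ k)))).smul
      (hW _ _ _ _ (hcoord _) (hcoord _) (hcoord _))

variable {T u v k σ}

lemma gmap_u (huv : u ≠ v) (p : stdSimplex ℝ (Fin 4)) :
    gmap T u v k σ (u, p) = bump ((p : Fin 4 → ℝ) k) •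
      W ((p : Fin 4 → ℝ) (Equiv.swap 0 k 1)) ((p : Fin 4 → ℝ) (Equiv.swap 0 k 2))
        ((p : Fin 4 → ℝ) (Equiv.swap 0 k 3)) 1 := by
  unfold gmap
  rw [if_pos rfl, if_neg huv, one_mul, zero_mul, zero_smul, add_zero]

lemma gmap_v (huv : u ≠ v) (p : stdSimplex ℝ (Fin 4)) :
    gmap T u v k σ (v, p) = bump ((p : Fin 4 → ℝ) (σ k)) •
      W ((p : Fin 4 → ℝ) (σ (Equiv.swap 0 k 1))) ((p : Fin 4 → ℝ) (σ (Equiv.swap 0 k 2)))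
        ((p : Fin 4 → ℝ) (σ (Equiv.swap 0 k 3))) (-1) := by
  unfold gmap
  rw [if_pos rfl, if_neg (Ne.symm huv), one_mul, zero_mul, zero_smul, zero_add]

lemma gmap_o {t : T.ι} (htu : t ≠ u) (htv : t ≠ v) (p : stdSimplex ℝ (Fin 4)) :
    gmap T u v k σ (t, p) = 0 := by
  unfold gmap
  rw [if_neg htu, if_neg htv, zero_mul, zero_mul, zero_smul, zero_smul, add_zero]

end Key2
end

section Key3
variable {T : Tri} {u v : T.ι} {k : Fin 4} {σ : Perm (Fin 4)}

lemma gmap_inv (huv : u ≠ v) (H : ∀ i, i ≠ k → T.glue (u, i) = some ((v, σ i), σ)) :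
    ∀ p q, T.spaceRel p q → gmap T u v k σ p = gmap T u v k σ q := by
  rintro ⟨t, pp⟩ ⟨t', qq⟩ ⟨i, G, σ', hglue, hpi, hq1, hq2⟩
  dsimp only at hglue hpi hq1 hq2
  have hcq : ∀ x, (qq : Fin 4 → ℝ) x = (pp : Fin 4 → ℝ) (σ'.symm x) := fun x => by
    rw [hq2]; rfl
  have hppn : ∀ j, 0 ≤ (pp : Fin 4 → ℝ) j := pp.2.1
  by_cases htu : t = u
  · rw [htu] at hglue
    have hgoal : gmap T u v k σ (t, pp) = gmap T u v k σ (u, pp) := by rw [htu]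
    rw [hgoal]
    by_cases hik : i = k
    · -- gluing along the face opposite the link vertex : both sides vanish
      rw [hik] at hglue hpi
      have hsymm := T.glue_symm _ _ _ hglue
      rw [gmap_u huv, hpi, bump_0, zero_smul]
      by_cases hGu : G.1 = u
      · exfalso
        have hG2 : G.2 ≠ k := by
          intro h
          exact T.glue_ne _ _ hglue (by rw [← @Prod.mk.eta _ _ G, hGu, h])
        rw [← @Prod.mk.eta _ _ G, hGu, H G.2 hG2] at hsymm
        have h1 : v = u := congrArg (Prod.fst ∘ Prod.fst) (Option.some.inj hsymm)
        exact huv h1.symm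
      · by_cases hGv : G.1 = v
        · have hG2 : G.2 = σ k := by
            by_contra hG2
            rw [← @Prod.mk.eta _ _ G, hGv, Hsymm H G.2 hG2] at hsymm
            have hsk : σ⁻¹ G.2 = k := congrArg (Prod.snd ∘ Prod.fst) (Option.some.inj hsymm)
            apply hG2
            rw [← hsk]
            simp
          have hvert := T.glue_vertex _ _ _ hglue
          rw [hG2] at hvert
          have hcqk : (qq : Fin 4 → ℝ) (σ k) = 0 := by
            rw [hcq, ← hvert]
            simpa using hpi
          have hgq : gmap T u v k σ (t', qq) = gmap T u v k σ (v, qq) := by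
            rw [hq1, hGv]
          rw [hgq, gmap_v huv, hcqk, bump_0, zero_smul]
        · have hgq : gmap T u v k σ (t', qq) = 0 := by
            rw [hq1, ← @Prod.mk.eta _ _ G]
            exact gmap_o hGu hGv qq
          rw [hgq]
    · -- gluing along a face containing the link vertex
      have hHi := H i hik
      rw [hHi] at hglue
      have hGe : (v, σ i) = G := congrArg Prod.fst (Option.some.inj hglue)
      have hσe : σ = σ' := congrArg Prod.snd (Option.some.inj hglue)
      have hcq' : ∀ x, (qq : Fin 4 → ℝ) (σ x) = (pp : Fin 4 → ℝ) x := by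
        intro x
        rw [hcq, ← hσe]
        simp
      have hgq : gmap T u v k σ (t', qq) = gmap T u v k σ (v, qq) := by
        rw [hq1, ← hGe]
      have hmin : min ((pp : Fin 4 → ℝ) (Equiv.swap 0 k 1))
          (min ((pp : Fin 4 → ℝ) (Equiv.swap 0 k 2)) ((pp : Fin 4 → ℝ) (Equiv.swap 0 k 3))) = 0 := by
        apply min3_zero (hppn _) (hppn _) (hppn _)
        rcases kk_enum k i with h | h | h | h
        · exact absurd h hik
        · left; rw [← h]; exact hpi
        · right; left; rw [← h]; exact hpi
        · right; right; rw [← h]; exact hpi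
      rw [hgq, gmap_u huv, gmap_v huv, hcq', hcq', hcq', hcq', W_pm hmin]
  · by_cases htv : t = v
    · rw [htv] at hglue
      have hgoal : gmap T u v k σ (t, pp) = gmap T u v k σ (v, pp) := by rw [htv]
      rw [hgoal]
      by_cases hik : i = σ k
      · rw [hik] at hglue hpi
        have hsymm := T.glue_symm _ _ _ hglue
        rw [gmap_v huv, hpi, bump_0, zero_smul]
        by_cases hGv : G.1 = v
        · exfalso
          have hG2 : G.2 ≠ σ k := by
            intro h
            exact T.glue_ne _ _ hglue (by rw [← @Prod.mk.eta _ _ G, hGv, h])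
          rw [← @Prod.mk.eta _ _ G, hGv, Hsymm H G.2 hG2] at hsymm
          have h1 : u = v := congrArg (Prod.fst ∘ Prod.fst) (Option.some.inj hsymm)
          exact huv h1
        · by_cases hGu : G.1 = u
          · have hG2 : G.2 = k := by
              by_contra hG2
              rw [← @Prod.mk.eta _ _ G, hGu, H G.2 hG2] at hsymm
              have h1 : σ G.2 = σ k := congrArg (Prod.snd ∘ Prod.fst) (Option.some.inj hsymm)
              exact hG2 (σ.injective h1)
            have hvert := T.glue_vertex _ _ _ hglue
            rw [hG2] at hvert
            have hcqk : (qq : Fin 4 → ℝ) k = 0 := by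
              rw [hcq, ← hvert]
              simpa using hpi
            have hgq : gmap T u v k σ (t', qq) = gmap T u v k σ (u, qq) := by
              rw [hq1, hGu]
            rw [hgq, gmap_u huv, hcqk, bump_0, zero_smul]
          · have hgq : gmap T u v k σ (t', qq) = 0 := by
              rw [hq1, ← @Prod.mk.eta _ _ G]
              exact gmap_o hGu hGv qq
            rw [hgq]
      · have hHi := Hsymm H i hik
        rw [hHi] at hglue
        have hGe : (u, σ⁻¹ i) = G := congrArg Prod.fst (Option.some.inj hglue)
        have hσe : σ⁻¹ = σ' := congrArg Prod.snd (Option.some.inj hglue)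
        have hcq' : ∀ x, (qq : Fin 4 → ℝ) x = (pp : Fin 4 → ℝ) (σ x) := by
          intro x
          rw [hcq, ← hσe]
          rfl
        have hgq : gmap T u v k σ (t', qq) = gmap T u v k σ (u, qq) := by
          rw [hq1, ← hGe]
        have hmin : min ((pp : Fin 4 → ℝ) (σ (Equiv.swap 0 k 1)))
            (min ((pp : Fin 4 → ℝ) (σ (Equiv.swap 0 k 2)))
              ((pp : Fin 4 → ℝ) (σ (Equiv.swap 0 k 3)))) = 0 := by
          apply min3_zero (hppn _) (hppn _) (hppn _)
          have hik' : σ.symm i ≠ k := by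
            intro h
            apply hik
            rw [← h]
            simp
          have his : σ (σ.symm i) = i := by simp
          rcases kk_enum k (σ.symm i) with h | h | h | h
          · exact absurd h hik'
          · left; rw [← h, his]; exact hpi
          · right; left; rw [← h, his]; exact hpi
          · right; right; rw [← h, his]; exact hpi
        rw [hgq, gmap_u huv, gmap_v huv, hcq', hcq', hcq', hcq', ← W_pm hmin]
    · -- t is neither u nor v : both sides vanish
      have hsymm := T.glue_symm _ _ _ hglue
      rw [gmap_o htu htv]
      by_cases hGu : G.1 = u
      · have hG2 : G.2 = k := by
          by_contra hG2
          rw [← @Prod.mk.eta _ _ G, hGu, H G.2 hG2] at hsymm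
          have h1 : v = t := congrArg (Prod.fst ∘ Prod.fst) (Option.some.inj hsymm)
          exact htv h1.symm
        have hvert := T.glue_vertex _ _ _ hglue
        rw [hG2] at hvert
        have hcqk : (qq : Fin 4 → ℝ) k = 0 := by
          rw [hcq, ← hvert]
          simpa using hpi
        have hgq : gmap T u v k σ (t', qq) = gmap T u v k σ (u, qq) := by
          rw [hq1, hGu]
        rw [hgq, gmap_u huv, hcqk, bump_0, zero_smul]
      · by_cases hGv : G.1 = v
        · have hG2 : G.2 = σ k := by
            by_contra hG2
            rw [← @Prod.mk.eta _ _ G, hGv, Hsymm H G.2 hG2] at hsymm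
            have h1 : u = t := congrArg (Prod.fst ∘ Prod.fst) (Option.some.inj hsymm)
            exact htu h1.symm
          have hvert := T.glue_vertex _ _ _ hglue
          rw [hG2] at hvert
          have hcqk : (qq : Fin 4 → ℝ) (σ k) = 0 := by
            rw [hcq, ← hvert]
            simpa using hpi
          have hgq : gmap T u v k σ (t', qq) = gmap T u v k σ (v, qq) := by
            rw [hq1, hGv]
          rw [hgq, gmap_v huv, hcqk, bump_0, zero_smul]
        · have hgq : gmap T u v k σ (t', qq) = 0 := by
            rw [hq1, ← @Prod.mk.eta _ _ G]
            exact gmap_o hGu hGv qq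
          rw [hgq]

end Key3


noncomputable section

lemma sum4' (e : Fin 4 ≃ Fin 4) (p : Fin 4 → ℝ) (hp : ∑ j, p j = 1) :
    p (e 0) + p (e 1) + p (e 2) + p (e 3) = 1 := by
  rw [← Equiv.sum_comp e p, Fin.sum_univ_four] at hp
  exact hp

def mkpt (e : Fin 4 ≃ Fin 4) (a b c : ℝ) (ha : 0 ≤ a) (hb : 0 ≤ b) (hc : 0 ≤ c)
    (hsum : a + b + c = 1/4) : stdSimplex ℝ (Fin 4) :=
  ⟨fun j => ![3/4, a, b, c] (e j), by
    constructor
    · intro j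
      have hall : ∀ i : Fin 4, 0 ≤ ![3/4, a, b, c] i := by
        intro i
        fin_cases i <;> simp [ha, hb, hc] <;> norm_num
      exact hall _
    · rw [Equiv.sum_comp e, Fin.sum_univ_four]
      show (3:ℝ)/4 + a + b + c = 1
      linarith⟩

lemma mkpt_coord (e : Fin 4 ≃ Fin 4) (a b c : ℝ) (ha : 0 ≤ a) (hb : 0 ≤ b) (hc : 0 ≤ c)
    (hsum : a + b + c = 1/4) (i : Fin 4) :
    (mkpt e a b c ha hb hc hsum : Fin 4 → ℝ) (e.symm i) = ![3/4, a, b, c] i := by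
  show ![3/4, a, b, c] (e (e.symm i)) = _
  rw [e.apply_symm_apply]

section Key4
variable {T : Tri} {u v : T.ι} {k : Fin 4} {σ : Perm (Fin 4)}
variable (huv : u ≠ v) (H : ∀ i, i ≠ k → T.glue (u, i) = some ((v, σ i), σ))

include huv H in
lemma huvH_dummy : True := trivial

def glift : T.Space → EuclideanSpace ℝ (Fin 3) :=
  Quot.lift (gmap T u v k σ) (gmap_inv huv H)

lemma glift_cont : Continuous (glift huv H) :=
  continuous_quot_lift _ (gmap_cont T u v k σ)

lemma glift_u (p : stdSimplex ℝ (Fin 4)) (hp : (p : Fin 4 → ℝ) k = 3/4) :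
    glift huv H (Quot.mk T.spaceRel (u, p)) =
      W ((p : Fin 4 → ℝ) (Equiv.swap 0 k 1)) ((p : Fin 4 → ℝ) (Equiv.swap 0 k 2))
        ((p : Fin 4 → ℝ) (Equiv.swap 0 k 3)) 1 := by
  show gmap T u v k σ (u, p) = _
  rw [gmap_u huv, hp, bump_34, one_smul]

lemma glift_v (p : stdSimplex ℝ (Fin 4)) (hp : (p : Fin 4 → ℝ) (σ k) = 3/4) :
    glift huv H (Quot.mk T.spaceRel (v, p)) =
      W ((p : Fin 4 → ℝ) (σ (Equiv.swap 0 k 1))) ((p : Fin 4 → ℝ) (σ (Equiv.swap 0 k 2)))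
        ((p : Fin 4 → ℝ) (σ (Equiv.swap 0 k 3))) (-1) := by
  show gmap T u v k σ (v, p) = _
  rw [gmap_v huv, hp, bump_34, one_smul]

lemma sum_u (p : stdSimplex ℝ (Fin 4)) (hp : (p : Fin 4 → ℝ) k = 3/4) :
    (p : Fin 4 → ℝ) (Equiv.swap 0 k 1) + (p : Fin 4 → ℝ) (Equiv.swap 0 k 2) +
      (p : Fin 4 → ℝ) (Equiv.swap 0 k 3) = 1/4 := by
  have h := sum4' (Equiv.swap 0 k) (p : Fin 4 → ℝ) p.2.2
  rw [kk0] at h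
  linarith

lemma sum_v (p : stdSimplex ℝ (Fin 4)) (hp : (p : Fin 4 → ℝ) (σ k) = 3/4) :
    (p : Fin 4 → ℝ) (σ (Equiv.swap 0 k 1)) + (p : Fin 4 → ℝ) (σ (Equiv.swap 0 k 2)) +
      (p : Fin 4 → ℝ) (σ (Equiv.swap 0 k 3)) = 1/4 := by
  have h := sum4' ((Equiv.swap 0 k).trans σ) (p : Fin 4 → ℝ) p.2.2
  simp only [Equiv.trans_apply] at h
  rw [kk0] at h
  linarith

include H in
lemma vadj_uv : Quot.mk T.vertAdj (v, σ k) = Quot.mk T.vertAdj (u, k) := by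
  refine (Quot.sound ?_).symm
  have h1 : Equiv.swap 0 k 1 ≠ k := kk_ne k 1 (by decide)
  exact ⟨Equiv.swap 0 k 1, (v, σ (Equiv.swap 0 k 1)), σ, h1, H _ h1, rfl⟩

lemma mem_link_u (p : stdSimplex ℝ (Fin 4)) (hp : (p : Fin 4 → ℝ) k = 3/4) :
    Quot.mk T.spaceRel (u, p) ∈ T.link (Quot.mk T.vertAdj (u, k)) :=
  ⟨u, k, p, rfl, hp, rfl⟩

include H in
lemma mem_link_v (p : stdSimplex ℝ (Fin 4)) (hp : (p : Fin 4 → ℝ) (σ k) = 3/4) :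
    Quot.mk T.spaceRel (v, p) ∈ T.link (Quot.mk T.vertAdj (u, k)) :=
  ⟨v, σ k, p, vadj_uv H, hp, rfl⟩

include H in
lemma link_repr (x : T.Space) (hx : x ∈ T.link (Quot.mk T.vertAdj (u, k))) :
    (∃ p : stdSimplex ℝ (Fin 4), (p : Fin 4 → ℝ) k = 3/4 ∧ x = Quot.mk T.spaceRel (u, p)) ∨
    (∃ p : stdSimplex ℝ (Fin 4), (p : Fin 4 → ℝ) (σ k) = 3/4 ∧ x = Quot.mk T.spaceRel (v, p)) := by
  obtain ⟨t, w, p, hV, hw, hxx⟩ := hx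
  rcases sp_lift H _ hV with h | h
  · left
    have h1 : t = u := congrArg Prod.fst h
    have h2 : w = k := congrArg Prod.snd h
    exact ⟨p, by rw [← h2]; exact hw, by rw [hxx, h1]; rfl⟩
  · right
    have h1 : t = v := congrArg Prod.fst h
    have h2 : w = σ k := congrArg Prod.snd h
    exact ⟨p, by rw [← h2]; exact hw, by rw [hxx, h1]; rfl⟩

include H in
lemma link_compact : IsCompact (T.link (Quot.mk T.vertAdj (u, k))) := by
  haveI : CompactSpace (stdSimplex ℝ (Fin 4)) :=
    isCompact_iff_compactSpace.mp (isCompact_stdSimplex ℝ (Fin 4))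
  have hcoord : ∀ j : Fin 4, Continuous (fun p : stdSimplex ℝ (Fin 4) => (p : Fin 4 → ℝ) j) :=
    fun j => (continuous_apply j).comp continuous_subtype_val
  have h1 : IsCompact {p : stdSimplex ℝ (Fin 4) | (p : Fin 4 → ℝ) k = 3/4} :=
    (isClosed_eq (hcoord k) continuous_const).isCompact
  have h2 : IsCompact {p : stdSimplex ℝ (Fin 4) | (p : Fin 4 → ℝ) (σ k) = 3/4} :=
    (isClosed_eq (hcoord (σ k)) continuous_const).isCompact
  have hcm : ∀ w : T.ι, Continuous (fun p : stdSimplex ℝ (Fin 4) =>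
      Quot.mk T.spaceRel ((w, p) : T.Pt)) := by
    intro w
    exact continuous_quot_mk.comp (continuous_const.prodMk continuous_id)
  have himg : T.link (Quot.mk T.vertAdj (u, k)) =
      (fun p : stdSimplex ℝ (Fin 4) => Quot.mk T.spaceRel ((u, p) : T.Pt)) ''
        {p | (p : Fin 4 → ℝ) k = 3/4} ∪
      (fun p : stdSimplex ℝ (Fin 4) => Quot.mk T.spaceRel ((v, p) : T.Pt)) ''
        {p | (p : Fin 4 → ℝ) (σ k) = 3/4} := by
    ext x
    constructor
    · intro hx
      rcases link_repr H x hx with ⟨p, hp, rfl⟩ | ⟨p, hp, rfl⟩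
      · exact Or.inl ⟨p, hp, rfl⟩
      · exact Or.inr ⟨p, hp, rfl⟩
    · rintro (⟨p, hp, rfl⟩ | ⟨p, hp, rfl⟩)
      · exact mem_link_u p hp
      · exact mem_link_v H p hp
  rw [himg]
  exact (h1.image (hcm u)).union (h2.image (hcm v))

lemma glift_ne_zero (x : T.Space) (hx : x ∈ T.link (Quot.mk T.vertAdj (u, k))) :
    glift huv H x ≠ 0 := by
  rcases link_repr H x hx with ⟨p, hp, rfl⟩ | ⟨p, hp, rfl⟩
  · rw [glift_u huv H p hp]
    exact W_ne_zero (sum_u p hp) (Or.inl rfl)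
  · rw [glift_v huv H p hp]
    exact W_ne_zero (sum_v p hp) (Or.inr rfl)

def linkFun (x : T.link (Quot.mk T.vertAdj (u, k))) : Sphere2 :=
  ⟨‖glift huv H x.1‖⁻¹ • glift huv H x.1, by
    rw [mem_sphere_zero_iff_norm, norm_smul, norm_inv, norm_norm]
    have h := glift_ne_zero huv H x.1 x.2
    rw [inv_mul_cancel₀ (norm_ne_zero_iff.mpr h)]⟩

lemma linkFun_cont : Continuous (linkFun huv H) := by
  apply Continuous.subtype_mk
  have hg : Continuous fun x : T.link (Quot.mk T.vertAdj (u, k)) => glift huv H x.1 :=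
    (glift_cont huv H).comp continuous_subtype_val
  exact (Continuous.inv₀ hg.norm fun x =>
    norm_ne_zero_iff.mpr (glift_ne_zero huv H x.1 x.2)).smul hg

end Key4
end


noncomputable section

noncomputable instance : T2Space Sphere2 :=
  inferInstanceAs (T2Space (Metric.sphere (0 : EuclideanSpace ℝ (Fin 3)) 1))

lemma eq_of_smul {A B : EuclideanSpace ℝ (Fin 3)} {l : ℝ} (hl : l ≠ 0) (h : A = l • B) :
    B = l⁻¹ • A := by
  rw [h, smul_smul, inv_mul_cancel₀ hl, one_smul]

section Key5
variable {T : Tri} {u v : T.ι} {k : Fin 4} {σ : Perm (Fin 4)}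
variable (huv : u ≠ v) (H : ∀ i, i ≠ k → T.glue (u, i) = some ((v, σ i), σ))

-- names for the three coordinates
local notation "c1" p => (p : Fin 4 → ℝ) (Equiv.swap 0 k 1)
local notation "c2" p => (p : Fin 4 → ℝ) (Equiv.swap 0 k 2)
local notation "c3" p => (p : Fin 4 → ℝ) (Equiv.swap 0 k 3)
local notation "d1" p => (p : Fin 4 → ℝ) (σ (Equiv.swap 0 k 1))
local notation "d2" p => (p : Fin 4 → ℝ) (σ (Equiv.swap 0 k 2))
local notation "d3" p => (p : Fin 4 → ℝ) (σ (Equiv.swap 0 k 3))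

lemma quot_uu_eq (p p' : stdSimplex ℝ (Fin 4)) (hp : (p : Fin 4 → ℝ) k = 3/4)
    (hp' : (p' : Fin 4 → ℝ) k = 3/4) {l : ℝ} (hl : 0 < l)
    (hW : W (c1 p) (c2 p) (c3 p) 1 = l • W (c1 p') (c2 p') (c3 p') 1) : p = p' := by
  obtain ⟨h1, h2, h3, -⟩ := W_inj (p.2.1 _) (p.2.1 _) (p.2.1 _) (p'.2.1 _) (p'.2.1 _) (p'.2.1 _)
    (sum_u p hp) (sum_u p' hp') (Or.inl rfl) (Or.inl rfl) hl hW
  apply Subtype.ext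
  funext j
  rcases kk_enum k j with rfl | rfl | rfl | rfl
  · exact hp.trans hp'.symm
  · exact h1
  · exact h2
  · exact h3

lemma quot_vv_eq (p p' : stdSimplex ℝ (Fin 4)) (hp : (p : Fin 4 → ℝ) (σ k) = 3/4)
    (hp' : (p' : Fin 4 → ℝ) (σ k) = 3/4) {l : ℝ} (hl : 0 < l)
    (hW : W (d1 p) (d2 p) (d3 p) (-1) = l • W (d1 p') (d2 p') (d3 p') (-1)) : p = p' := by
  obtain ⟨h1, h2, h3, -⟩ := W_inj (p.2.1 _) (p.2.1 _) (p.2.1 _) (p'.2.1 _) (p'.2.1 _) (p'.2.1 _)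
    (sum_v p hp) (sum_v p' hp') (Or.inr rfl) (Or.inr rfl) hl hW
  apply Subtype.ext
  funext j
  have hjs : σ (σ.symm j) = j := σ.apply_symm_apply j
  rcases kk_enum k (σ.symm j) with hh | hh | hh | hh <;> rw [← hjs, hh]
  · exact hp.trans hp'.symm
  · exact h1
  · exact h2
  · exact h3

include H in
lemma quot_uv_eq (p q : stdSimplex ℝ (Fin 4)) (hp : (p : Fin 4 → ℝ) k = 3/4)
    (hq : (q : Fin 4 → ℝ) (σ k) = 3/4) {l : ℝ} (hl : 0 < l)
    (hW : W (c1 p) (c2 p) (c3 p) 1 = l • W (d1 q) (d2 q) (d3 q) (-1)) :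
    Quot.mk T.spaceRel (u, p) = Quot.mk T.spaceRel (v, q) := by
  obtain ⟨h1, h2, h3, hor⟩ := W_inj (p.2.1 _) (p.2.1 _) (p.2.1 _) (q.2.1 _) (q.2.1 _) (q.2.1 _)
    (sum_u p hp) (sum_v q hq) (Or.inl rfl) (Or.inr rfl) hl hW
  have hmin : min (c1 p) (min (c2 p) (c3 p)) = 0 := by
    rcases hor with h | h
    · norm_num at h
    · exact h.1
  have hfun : (q : Fin 4 → ℝ) = (p : Fin 4 → ℝ) ∘ ⇑σ.symm := by
    funext j
    have hjs : σ (σ.symm j) = j := σ.apply_symm_apply j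
    show (q : Fin 4 → ℝ) j = (p : Fin 4 → ℝ) (σ.symm j)
    rcases kk_enum k (σ.symm j) with hh | hh | hh | hh <;> rw [← hjs, hh]
    · rw [hq]
      simp [hp]
    · rw [σ.symm_apply_apply]; exact h1.symm
    · rw [σ.symm_apply_apply]; exact h2.symm
    · rw [σ.symm_apply_apply]; exact h3.symm
  apply Quot.sound
  rcases min3_zero_cases hmin with hz | hz | hz
  · exact ⟨Equiv.swap 0 k 1, (v, σ (Equiv.swap 0 k 1)), σ,
      H _ (kk_ne k 1 (by decide)), hz, rfl, hfun⟩
  · exact ⟨Equiv.swap 0 k 2, (v, σ (Equiv.swap 0 k 2)), σ,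
      H _ (kk_ne k 2 (by decide)), hz, rfl, hfun⟩
  · exact ⟨Equiv.swap 0 k 3, (v, σ (Equiv.swap 0 k 3)), σ,
      H _ (kk_ne k 3 (by decide)), hz, rfl, hfun⟩

lemma linkFun_inj : Function.Injective (linkFun huv H) := by
  intro x y h
  have hval : ‖glift huv H x.1‖⁻¹ • glift huv H x.1 = ‖glift huv H y.1‖⁻¹ • glift huv H y.1 :=
    congrArg Subtype.val h
  have hx0 := glift_ne_zero huv H x.1 x.2
  have hy0 := glift_ne_zero huv H y.1 y.2
  have hxn : (0:ℝ) < ‖glift huv H x.1‖ := norm_pos_iff.mpr hx0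
  have hyn : (0:ℝ) < ‖glift huv H y.1‖ := norm_pos_iff.mpr hy0
  have hsm : glift huv H x.1 = (‖glift huv H x.1‖ / ‖glift huv H y.1‖) • glift huv H y.1 := by
    calc glift huv H x.1 = ‖glift huv H x.1‖ • (‖glift huv H x.1‖⁻¹ • glift huv H x.1) := by
          rw [smul_smul, mul_inv_cancel₀ (ne_of_gt hxn), one_smul]
      _ = ‖glift huv H x.1‖ • (‖glift huv H y.1‖⁻¹ • glift huv H y.1) := by rw [hval]
      _ = (‖glift huv H x.1‖ / ‖glift huv H y.1‖) • glift huv H y.1 := by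
          rw [smul_smul, div_eq_mul_inv]
  have hl : (0:ℝ) < ‖glift huv H x.1‖ / ‖glift huv H y.1‖ := div_pos hxn hyn
  set l : ℝ := ‖glift huv H x.1‖ / ‖glift huv H y.1‖ with hldef
  rcases link_repr H x.1 x.2 with ⟨p, hp, hxq⟩ | ⟨p, hp, hxq⟩ <;>
    rcases link_repr H y.1 y.2 with ⟨q, hq, hyq⟩ | ⟨q, hq, hyq⟩
  · rw [hxq, hyq, glift_u huv H p hp, glift_u huv H q hq] at hsm
    have := quot_uu_eq p q hp hq hl hsm
    apply Subtype.ext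
    rw [hxq, hyq, this]
  · rw [hxq, hyq, glift_u huv H p hp, glift_v huv H q hq] at hsm
    apply Subtype.ext
    rw [hxq, hyq]
    exact quot_uv_eq H p q hp hq hl hsm
  · rw [hxq, hyq, glift_v huv H p hp, glift_u huv H q hq] at hsm
    apply Subtype.ext
    rw [hxq, hyq]
    refine (quot_uv_eq H q p hq hp (l := l⁻¹) (inv_pos.mpr hl) ?_).symm
    exact eq_of_smul (ne_of_gt hl) hsm
  · rw [hxq, hyq, glift_v huv H p hp, glift_v huv H q hq] at hsm
    have := quot_vv_eq p q hp hq hl hsm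
    apply Subtype.ext
    rw [hxq, hyq, this]

end Key5
end

noncomputable section
section Key6
variable {T : Tri} {u v : T.ι} {k : Fin 4} {σ : Perm (Fin 4)}
variable (huv : u ≠ v) (H : ∀ i, i ≠ k → T.glue (u, i) = some ((v, σ i), σ))

lemma linkFun_surj : Function.Surjective (linkFun huv H) := by
  intro s
  have hs1 : ‖(s.1 : EuclideanSpace ℝ (Fin 3))‖ = 1 := mem_sphere_zero_iff_norm.mp s.2
  obtain ⟨a, b, c, t, ha, hb, hc, hsum, ht, hW⟩ := W_surj s.1 hs1
  by_cases hsg : 0 ≤ (s.1 : EuclideanSpace ℝ (Fin 3)) 2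
  · rw [if_pos hsg] at hW
    set p := mkpt (Equiv.swap 0 k) a b c ha hb hc hsum with hpdef
    have hesymm : (Equiv.swap 0 k).symm = Equiv.swap 0 k := Equiv.symm_swap 0 k
    have hpk : (p : Fin 4 → ℝ) k = 3/4 := by
      have hh := mkpt_coord (Equiv.swap 0 k) a b c ha hb hc hsum 0
      rw [hesymm, kk0] at hh
      exact hh
    have hp1 : (p : Fin 4 → ℝ) (Equiv.swap 0 k 1) = a := by
      have hh := mkpt_coord (Equiv.swap 0 k) a b c ha hb hc hsum 1
      rw [hesymm] at hh
      exact hh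
    have hp2 : (p : Fin 4 → ℝ) (Equiv.swap 0 k 2) = b := by
      have hh := mkpt_coord (Equiv.swap 0 k) a b c ha hb hc hsum 2
      rw [hesymm] at hh
      exact hh
    have hp3 : (p : Fin 4 → ℝ) (Equiv.swap 0 k 3) = c := by
      have hh := mkpt_coord (Equiv.swap 0 k) a b c ha hb hc hsum 3
      rw [hesymm] at hh
      exact hh
    refine ⟨⟨Quot.mk T.spaceRel (u, p), mem_link_u p hpk⟩, ?_⟩
    apply Subtype.ext
    show ‖glift huv H (Quot.mk T.spaceRel (u, p))‖⁻¹ • glift huv H (Quot.mk T.spaceRel (u, p))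
      = s.1
    rw [glift_u huv H p hpk, hp1, hp2, hp3, hW, norm_smul, hs1, mul_one, Real.norm_eq_abs,
      abs_of_pos ht, smul_smul, inv_mul_cancel₀ (ne_of_gt ht), one_smul]
  · rw [if_neg hsg] at hW
    set e : Fin 4 ≃ Fin 4 := σ.symm.trans (Equiv.swap 0 k) with hedef
    have hesymm : ∀ i, e.symm i = σ (Equiv.swap 0 k i) := fun i => rfl
    set p := mkpt e a b c ha hb hc hsum with hpdef
    have hpk : (p : Fin 4 → ℝ) (σ k) = 3/4 := by
      have hh := mkpt_coord e a b c ha hb hc hsum 0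
      rw [hesymm, kk0] at hh
      exact hh
    have hp1 : (p : Fin 4 → ℝ) (σ (Equiv.swap 0 k 1)) = a := by
      have hh := mkpt_coord e a b c ha hb hc hsum 1
      rw [hesymm] at hh
      exact hh
    have hp2 : (p : Fin 4 → ℝ) (σ (Equiv.swap 0 k 2)) = b := by
      have hh := mkpt_coord e a b c ha hb hc hsum 2
      rw [hesymm] at hh
      exact hh
    have hp3 : (p : Fin 4 → ℝ) (σ (Equiv.swap 0 k 3)) = c := by
      have hh := mkpt_coord e a b c ha hb hc hsum 3
      rw [hesymm] at hh
      exact hh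
    refine ⟨⟨Quot.mk T.spaceRel (v, p), mem_link_v H p hpk⟩, ?_⟩
    apply Subtype.ext
    show ‖glift huv H (Quot.mk T.spaceRel (v, p))‖⁻¹ • glift huv H (Quot.mk T.spaceRel (v, p))
      = s.1
    rw [glift_v huv H p hpk, hp1, hp2, hp3, hW, norm_smul, hs1, mul_one, Real.norm_eq_abs,
      abs_of_pos ht, smul_smul, inv_mul_cancel₀ (ne_of_gt ht), one_smul]

include huv H in
lemma key (hM : T.vertexCount = 1 ∨ ∀ V : T.VertClass, ¬ T.HasSphericalLink V) : False := by
  rcases hM with h1 | h2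
  · exact vertclass_two H huv h1
  · apply h2 (Quot.mk T.vertAdj (u, k))
    haveI : CompactSpace (T.link (Quot.mk T.vertAdj (u, k))) :=
      isCompact_iff_compactSpace.mp (link_compact H)
    exact ⟨Continuous.homeoOfEquivCompactToT2
      (f := Equiv.ofBijective _ ⟨linkFun_inj huv H, linkFun_surj huv H⟩) (linkFun_cont huv H)⟩

end Key6
end

lemma contra_k (T : Tri)
    (tU tV : T.ι) (hne : tU ≠ tV) (πU πV : Perm (Fin 4))
    (h2 : T.glue (tU, πU 2) = some ((tV, πV 2), πV * p01 * πU⁻¹))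
    (h3 : T.glue (tU, πU 3) = some ((tV, πV 3), πV * p01 * πU⁻¹))
    (hM : T.vertexCount = 1 ∨ ∀ V : T.VertClass, ¬ T.HasSphericalLink V)
    (m : Fin 4) (hm : m = 0 ∨ m = 1)
    (hforce : T.glue (tU, πU (p01 m)) = some ((tV, πV m), πV * p01 * πU⁻¹)) : False := by
  have hσs : ∀ x, (πV * p01 * πU⁻¹) (πU x) = πV (p01 x) := by
    intro x
    simp only [Perm.mul_apply, Perm.inv_def, Equiv.symm_apply_apply]
  apply key (T := T) (u := tU) (v := tV) (k := πU m) (σ := πV * p01 * πU⁻¹) hne ?_ hM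
  intro i hi
  have hix : i = πU (πU.symm i) := by simp
  have hji : πU.symm i ≠ m := fun h => hi (by rw [hix, h])
  have hcases : πU.symm i = p01 m ∨ πU.symm i = 2 ∨ πU.symm i = 3 :=
    (show ∀ m' j : Fin 4, (m' = 0 ∨ m' = 1) → j ≠ m' → j = p01 m' ∨ j = 2 ∨ j = 3 by decide)
      m (πU.symm i) hm hji
  rcases hcases with hj | hj | hj <;> rw [hix, hj, hσs]
  · have hpp : p01 (p01 m) = m := by rcases hm with rfl | rfl <;> decide
    rw [hpp]
    exact hforce
  · have hpp : p01 (2 : Fin 4) = 2 := by decide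
    rw [hpp]
    exact h2
  · have hpp : p01 (3 : Fin 4) = 3 := by decide
    rw [hpp]
    exact h3


/-- Let `𝒯` be a single-vertex triangulation of a closed oriented three-manifold,
or an ideal triangulation of an oriented three-manifold with no spherical
boundary components (no vertex has a spherical link), with no degree one edges.
Let `e` be a degree two edge whose two incident tetrahedra `tU ≠ tV` are glued
along the two faces containing `e` (the labelling is such that `e` is the edge
`{πU 0, πU 1}` of `tU`, the triangle `△` is the face `(tU, πU 2)` with other
edges `e' = {πU 0, πU 3}` and `e'' = {πU 1, πU 3}`, and the two tetrahedra are
also glued along the edges `ē' = {πU 0, πU 2}` and `ē'' = {πU 1, πU 2}`).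
Then each of `e'`, `e''`, `ē'`, `ē''` has degree at least three. -/
theorem edges_next_to_degree_two_edge_have_degree_three
    (T : Tri) (hb : T.Boundaryless) (hnd : ¬ T.HasDegOneEdge)
    (hM : T.vertexCount = 1 ∨ ∀ V : T.VertClass, ¬ T.HasSphericalLink V)
    (tU tV : T.ι) (hne : tU ≠ tV) (πU πV : Perm (Fin 4))
    (hsU : Perm.sign πU = 1) (hsV : Perm.sign πV = 1)
    (h2 : T.glue (tU, πU 2) = some ((tV, πV 2), πV * p01 * πU⁻¹))
    (h3 : T.glue (tU, πU 3) = some ((tV, πV 3), πV * p01 * πU⁻¹)) :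
    3 ≤ T.degree (T.edgeOf (tU, epair (πU 0) (πU 3) (πU.injective.ne (by decide)))) ∧
    3 ≤ T.degree (T.edgeOf (tU, epair (πU 1) (πU 3) (πU.injective.ne (by decide)))) ∧
    3 ≤ T.degree (T.edgeOf (tU, epair (πU 0) (πU 2) (πU.injective.ne (by decide)))) ∧
    3 ≤ T.degree (T.edgeOf (tU, epair (πU 1) (πU 2) (πU.injective.ne (by decide)))) := by
  refine ⟨?_, ?_, ?_, ?_⟩ <;> by_contra hcon
  · have hdeg : T.degree (T.edgeOf (tU, epair (πU 0) (πU 3)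
        (πU.injective.ne (by decide : (0:Fin 4) ≠ 3)))) ≤ 2 := by omega
    exact contra_k T tU tV hne πU πV h2 h3 hM 0 (Or.inl rfl)
      (force T hb tU tV hne πU πV hsU hsV h2 h3 0 3 (Or.inl rfl) (Or.inr rfl) (by decide) hdeg)
  · have hdeg : T.degree (T.edgeOf (tU, epair (πU 1) (πU 3)
        (πU.injective.ne (by decide : (1:Fin 4) ≠ 3)))) ≤ 2 := by omega
    exact contra_k T tU tV hne πU πV h2 h3 hM 1 (Or.inr rfl)
      (force T hb tU tV hne πU πV hsU hsV h2 h3 1 3 (Or.inr rfl) (Or.inr rfl) (by decide) hdeg)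
  · have hdeg : T.degree (T.edgeOf (tU, epair (πU 0) (πU 2)
        (πU.injective.ne (by decide : (0:Fin 4) ≠ 2)))) ≤ 2 := by omega
    exact contra_k T tU tV hne πU πV h2 h3 hM 0 (Or.inl rfl)
      (force T hb tU tV hne πU πV hsU hsV h2 h3 0 2 (Or.inl rfl) (Or.inl rfl) (by decide) hdeg)
  · have hdeg : T.degree (T.edgeOf (tU, epair (πU 1) (πU 2)
        (πU.injective.ne (by decide : (1:Fin 4) ≠ 2)))) ≤ 2 := by omega
    exact contra_k T tU tV hne πU πV h2 h3 hM 1 (Or.inr rfl)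
      (force T hb tU tV hne πU πV hsU hsV h2 h3 1 2 (Or.inr rfl) (Or.inl rfl) (by decide) hdeg)
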